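/- For a, b : Fin m → ZMod 2, let A^a be the product of the matrices A_i over those indices i with a_i = 1 and let B^b be the product of the matrices B_j over those indices j with b_j = 1 (each product is well defined since the A_i pairwise commute and the B_j pairwise commute), and let δ(a,b) be the number of pairs (i, j) with a_i = 1, b_j = 1 and j ≤ i. Then B^b A^a = (−1)^{δ(a,b)} A^a B^b, and consequently (A^a B^b)² = (−1)^{δ(a,b)} · 1. -/
import Mathlib


open Matrix

/-- The mirror-reflection generator `A_i` of size `2^m`. -/
def mirrorA (m i : ℕ) : Matrix (Fin (2 ^ m)) (Fin (2 ^ m)) ℝ :=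
  Matrix.of fun k l =>
    if (k : ℕ) / 2 ^ i = (l : ℕ) / 2 ^ i ∧ (k : ℕ) % 2 ^ i + (l : ℕ) % 2 ^ i = 2 ^ i - 1
    then 1 else 0

/-- The mirror-inversion generator `B_i` of size `2^m`. -/
def mirrorB (m i : ℕ) : Matrix (Fin (2 ^ m)) (Fin (2 ^ m)) ℝ :=
  Matrix.diagonal fun k => (-1 : ℝ) ^ ((k : ℕ) / 2 ^ (i - 1))

/-- The product `A^a` of the generators `A_{i+1}` over those `i : Fin m` with `a i = 1`
(taken in the natural order; since the `A_i` pairwise commute the order is immaterial). -/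
def mirrorAProd (m : ℕ) (a : Fin m → ZMod 2) : Matrix (Fin (2 ^ m)) (Fin (2 ^ m)) ℝ :=
  ((List.finRange m).map fun i => if a i = 1 then mirrorA m ((i : ℕ) + 1) else 1).prod

/-- The product `B^b` of the generators `B_{j+1}` over those `j : Fin m` with `b j = 1`
(taken in the natural order; since the `B_j` pairwise commute the order is immaterial). -/
def mirrorBProd (m : ℕ) (b : Fin m → ZMod 2) : Matrix (Fin (2 ^ m)) (Fin (2 ^ m)) ℝ :=
  ((List.finRange m).map fun j => if b j = 1 then mirrorB m ((j : ℕ) + 1) else 1).prod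

/-- `δ(a,b)`: the number of pairs `(i, j)` with `a i = 1`, `b j = 1` and `j ≤ i`. -/
def mirrorDelta (m : ℕ) (a b : Fin m → ZMod 2) : ℕ :=
  (Finset.univ.filter fun p : Fin m × Fin m => a p.1 = 1 ∧ b p.2 = 1 ∧ p.2 ≤ p.1).card

/-! ### Arithmetic of bit reflections -/

/-- Reflection of the low `s` bits. -/
def fRef (s k : ℕ) : ℕ := 2 ^ s * (k / 2 ^ s) + (2 ^ s - 1 - k % 2 ^ s)

lemma divHelper {p A B : ℕ} (hp : 0 < p) (hB : B < p) : (p * A + B) / p = A := by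
  rw [Nat.mul_add_div hp, Nat.div_eq_of_lt hB, add_zero]

lemma modHelper {p A B : ℕ} (hB : B < p) : (p * A + B) % p = B := by
  rw [Nat.mul_add_mod, Nat.mod_eq_of_lt hB]

lemma fRef_eq (s : ℕ) {k q r : ℕ} (hr : r < 2 ^ s) (hk : k = 2 ^ s * q + r) :
    fRef s k = 2 ^ s * q + (2 ^ s - 1 - r) := by
  rw [fRef, hk, divHelper (by positivity) hr, modHelper hr]

lemma fRef_decomp (s k : ℕ) : k = 2 ^ s * (k / 2 ^ s) + k % 2 ^ s := (Nat.div_add_mod k _).symm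

lemma mod_lt_pow (s k : ℕ) : k % 2 ^ s < 2 ^ s := Nat.mod_lt _ (by positivity)

lemma fRef_invol (s k : ℕ) : fRef s (fRef s k) = k := by
  have h2s : (0:ℕ) < 2 ^ s := by positivity
  have hm := mod_lt_pow s k
  have h1 := fRef_eq s hm (fRef_decomp s k)
  have h2 := fRef_eq s (k := fRef s k) (q := k / 2 ^ s) (r := 2 ^ s - 1 - k % 2 ^ s)
    (by omega) h1
  have h3 := fRef_decomp s k
  omega

lemma fRef_lt (s m k : ℕ) (hs : s ≤ m) (hk : k < 2 ^ m) : fRef s k < 2 ^ m := by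
  have h2s : (0:ℕ) < 2 ^ s := by positivity
  have hm := mod_lt_pow s k
  have h1 : k / 2 ^ s < 2 ^ (m - s) := by
    rw [Nat.div_lt_iff_lt_mul (by positivity), ← pow_add]
    have e : m - s + s = m := by omega
    rwa [e]
  have h3 : (2:ℕ) ^ s * 2 ^ (m - s) = 2 ^ m := by rw [← pow_add]; congr 1; omega
  have key : 2 ^ s * (k / 2 ^ s + 1) ≤ 2 ^ m := by
    rw [← h3]; exact Nat.mul_le_mul_left _ h1
  have e : 2 ^ s * (k / 2 ^ s + 1) = 2 ^ s * (k / 2 ^ s) + 2 ^ s := by ring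
  show 2 ^ s * (k / 2 ^ s) + (2 ^ s - 1 - k % 2 ^ s) < 2 ^ m
  omega

/-- Fine decomposition. -/
lemma fine_decomp {s t : ℕ} (h : s ≤ t) (k : ℕ) :
    k = 2 ^ t * (k / 2 ^ t) + (2 ^ s * (k % 2 ^ t / 2 ^ s) + k % 2 ^ s) ∧
      k % 2 ^ t / 2 ^ s < 2 ^ (t - s) := by
  have hdvd : (2:ℕ) ^ s ∣ 2 ^ t := pow_dvd_pow 2 h
  have h1 : k % 2 ^ t % 2 ^ s = k % 2 ^ s := Nat.mod_mod_of_dvd k hdvd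
  have h2 := fRef_decomp t k
  have h3 := fRef_decomp s (k % 2 ^ t)
  have h4 : k % 2 ^ t / 2 ^ s < 2 ^ (t - s) := by
    rw [Nat.div_lt_iff_lt_mul (by positivity), ← pow_add]
    have e : t - s + s = t := by omega
    rw [e]; exact mod_lt_pow t k
  exact ⟨by omega, h4⟩

lemma fRef_comm_aux {s t : ℕ} (h : s ≤ t) (k : ℕ) : fRef s (fRef t k) = fRef t (fRef s k) := by
  obtain ⟨hk, hu⟩ := fine_decomp h k
  set q := k / 2 ^ t with hqdef
  set u := k % 2 ^ t / 2 ^ s with hudef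
  set v := k % 2 ^ s with hvdef
  have hv : v < 2 ^ s := mod_lt_pow s k
  set D := 2 ^ (t - s) with hDdef
  have hD : (2:ℕ) ^ t = 2 ^ s * D := by rw [hDdef, ← pow_add]; congr 1; omega
  have h2s : (0:ℕ) < 2 ^ s := by positivity
  have e1 : (2:ℕ) ^ t * q = 2 ^ s * (D * q) := by rw [hD]; ring
  have hsub1 : (2:ℕ) ^ s * (D - 1 - u) = 2 ^ s * D - 2 ^ s - 2 ^ s * u := by
    rw [Nat.mul_sub, Nat.mul_sub, Nat.mul_one]
  have hb : 2 ^ s * u + 2 ^ s ≤ 2 ^ s * D := by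
    have h5 : u + 1 ≤ D := hu
    calc 2 ^ s * u + 2 ^ s = 2 ^ s * (u + 1) := by ring
      _ ≤ 2 ^ s * D := Nat.mul_le_mul_left _ h5
  have e2 : (2:ℕ) ^ s * (D * q + (D - 1 - u)) = 2 ^ s * (D * q) + 2 ^ s * (D - 1 - u) :=
    Nat.mul_add _ _ _
  have e3 : (2:ℕ) ^ s * (D * q + u) = 2 ^ s * (D * q) + 2 ^ s * u := Nat.mul_add _ _ _
  have h_fs : fRef s k = 2 ^ s * (D * q + u) + (2 ^ s - 1 - v) :=
    fRef_eq s hv (by rw [hk, e1, e3]; ring)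
  have h_ft : fRef t k = 2 ^ t * q + (2 ^ t - 1 - (2 ^ s * u + v)) :=
    fRef_eq t (by omega) hk
  have claim : fRef t k = 2 ^ s * (D * q + (D - 1 - u)) + (2 ^ s - 1 - v) := by omega
  have hLHS := fRef_eq s (k := fRef t k) (q := D * q + (D - 1 - u)) (r := 2 ^ s - 1 - v)
    (by omega) claim
  have claim2 : fRef s k = 2 ^ t * q + (2 ^ s * u + (2 ^ s - 1 - v)) := by omega
  have hRHS := fRef_eq t (k := fRef s k) (q := q) (r := 2 ^ s * u + (2 ^ s - 1 - v))
    (by omega) claim2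
  omega

lemma fRef_comm (s t k : ℕ) : fRef s (fRef t k) = fRef t (fRef s k) := by
  rcases le_total s t with h | h
  · exact fRef_comm_aux h k
  · exact (fRef_comm_aux h k).symm

lemma fRef_div_self (s k : ℕ) : fRef s k / 2 ^ s = k / 2 ^ s := by
  have hm := mod_lt_pow s k
  have h2s : (0:ℕ) < 2 ^ s := by positivity
  rw [fRef]
  exact divHelper h2s (by omega)

lemma fRef_mod_self (s k : ℕ) : fRef s k % 2 ^ s = 2 ^ s - 1 - k % 2 ^ s := by
  have hm := mod_lt_pow s k
  have h2s : (0:ℕ) < 2 ^ s := by positivity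
  rw [fRef]
  exact modHelper (by omega)

/-- High bits unchanged. -/
lemma fRef_div_high {s u : ℕ} (h : s ≤ u) (k : ℕ) : fRef s k / 2 ^ u = k / 2 ^ u := by
  have e : (2:ℕ) ^ u = 2 ^ s * 2 ^ (u - s) := by rw [← pow_add]; congr 1; omega
  rw [e, ← Nat.div_div_eq_div_mul, ← Nat.div_div_eq_div_mul, fRef_div_self]

/-- Low bits: the sum of quotients is odd. -/
lemma fRef_div_low {u s : ℕ} (h : u < s) (k : ℕ) : (k / 2 ^ u + fRef s k / 2 ^ u) % 2 = 1 := by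
  obtain ⟨hk, hw⟩ := fine_decomp (le_of_lt h) k
  set q := k / 2 ^ s with hqdef
  set w := k % 2 ^ s / 2 ^ u with hwdef
  set v := k % 2 ^ u with hvdef
  have hv : v < 2 ^ u := mod_lt_pow u k
  set E := 2 ^ (s - u) with hEdef
  have hE : (2:ℕ) ^ s = 2 ^ u * E := by rw [hEdef, ← pow_add]; congr 1; omega
  have hE2 : E % 2 = 0 := by
    have : 2 ∣ E := by rw [hEdef]; exact dvd_pow_self 2 (by omega)
    omega
  have hu0 : (0:ℕ) < 2 ^ u := by positivity
  have e1 : (2:ℕ) ^ s * q = 2 ^ u * (E * q) := by rw [hE]; ring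
  have e4 : (2:ℕ) ^ u * (E * q + w) = 2 ^ u * (E * q) + 2 ^ u * w := Nat.mul_add _ _ _
  have hk2 : k = 2 ^ u * (E * q + w) + v := by omega
  have h1 : k / 2 ^ u = E * q + w := by rw [hk2]; exact divHelper hu0 hv
  have bw : 2 ^ u * w + 2 ^ u ≤ 2 ^ u * E := by
    have h5 : w + 1 ≤ E := hw
    calc 2 ^ u * w + 2 ^ u = 2 ^ u * (w + 1) := by ring
      _ ≤ 2 ^ u * E := Nat.mul_le_mul_left _ h5
  have h_fs : fRef s k = 2 ^ s * q + (2 ^ s - 1 - (2 ^ u * w + v)) :=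
    fRef_eq s (by omega) hk
  have e5 : (2:ℕ) ^ u * (E * q + (E - 1 - w)) = 2 ^ u * (E * q) + 2 ^ u * (E - 1 - w) :=
    Nat.mul_add _ _ _
  have e6 : (2:ℕ) ^ u * (E - 1 - w) = 2 ^ u * E - 2 ^ u - 2 ^ u * w := by
    rw [Nat.mul_sub, Nat.mul_sub, Nat.mul_one]
  have claim : fRef s k = 2 ^ u * (E * q + (E - 1 - w)) + (2 ^ u - 1 - v) := by omega
  have h5 : fRef s k / 2 ^ u = E * q + (E - 1 - w) := by
    rw [claim]; exact divHelper hu0 (by omega)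
  rw [h1, h5]
  omega

/-! ### Matrices attached to functions -/

/-- The 0-1 matrix of a self-map of `Fin N`. -/
def funMat {N : ℕ} (f : Fin N → Fin N) : Matrix (Fin N) (Fin N) ℝ :=
  Matrix.of fun k l => if l = f k then 1 else 0

lemma funMat_mul {N : ℕ} (f g : Fin N → Fin N) :
    funMat f * funMat g = funMat fun k => g (f k) := by
  ext k l
  simp only [funMat, Matrix.mul_apply, Matrix.of_apply]
  rw [Finset.sum_eq_single (f k)]
  · simp
  · intro n _ hn; simp [hn]
  · simp

lemma funMat_id {N : ℕ} : funMat (id : Fin N → Fin N) = 1 := by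
  ext k l
  simp [funMat, Matrix.one_apply, eq_comm]

lemma diag_funMat_swap {N : ℕ} (d : Fin N → ℝ) (f : Fin N → Fin N) (c : ℝ)
    (h : ∀ k, d k = c * d (f k)) :
    Matrix.diagonal d * funMat f = c • (funMat f * Matrix.diagonal d) := by
  ext k l
  simp only [Matrix.diagonal_mul, Matrix.mul_diagonal, Matrix.smul_apply, funMat,
    Matrix.of_apply, smul_eq_mul]
  by_cases hl : l = f k
  · subst hl; simpa using h k
  · simp [hl]

/-- The reflection as a self-map of `Fin (2^m)`. -/
def fFin {m : ℕ} (i : Fin m) (k : Fin (2 ^ m)) : Fin (2 ^ m) :=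
  ⟨fRef ((i : ℕ) + 1) (k : ℕ), fRef_lt _ _ _ i.isLt k.isLt⟩

lemma cond_iff (s k l : ℕ) :
    (k / 2 ^ s = l / 2 ^ s ∧ k % 2 ^ s + l % 2 ^ s = 2 ^ s - 1) ↔ l = fRef s k := by
  have h2s : (0:ℕ) < 2 ^ s := by positivity
  have hmk := mod_lt_pow s k
  have hml := mod_lt_pow s l
  constructor
  · rintro ⟨h1, h2⟩
    have hl := fRef_decomp s l
    rw [← h1] at hl
    have hf : fRef s k = 2 ^ s * (k / 2 ^ s) + (2 ^ s - 1 - k % 2 ^ s) := rfl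
    omega
  · rintro rfl
    refine ⟨(fRef_div_self s k).symm, ?_⟩
    rw [fRef_mod_self]
    omega

lemma mirrorA_eq {m : ℕ} (i : Fin m) : mirrorA m ((i : ℕ) + 1) = funMat (fFin i) := by
  ext k l
  simp only [mirrorA, funMat, Matrix.of_apply]
  have h := cond_iff ((i : ℕ) + 1) (k : ℕ) (l : ℕ)
  have h2 : l = fFin i k ↔ (l : ℕ) = fRef ((i : ℕ) + 1) (k : ℕ) := by
    rw [Fin.ext_iff]; rfl
  rw [if_congr (h.trans h2.symm) rfl rfl]

lemma swapBA {m : ℕ} (i j : Fin m) :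
    mirrorB m ((j : ℕ) + 1) * mirrorA m ((i : ℕ) + 1) =
      ((-1 : ℝ) ^ (if (j : ℕ) ≤ (i : ℕ) then 1 else 0)) •
        (mirrorA m ((i : ℕ) + 1) * mirrorB m ((j : ℕ) + 1)) := by
  have hB : mirrorB m ((j : ℕ) + 1)
      = Matrix.diagonal fun k : Fin (2 ^ m) => (-1 : ℝ) ^ ((k : ℕ) / 2 ^ (j : ℕ)) := by
    simp [mirrorB]
  rw [hB, mirrorA_eq i]
  apply diag_funMat_swap
  intro k
  have hval : ((fFin i k : Fin (2 ^ m)) : ℕ) = fRef ((i : ℕ) + 1) (k : ℕ) := rfl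
  by_cases hji : (j : ℕ) ≤ (i : ℕ)
  · rw [if_pos hji, pow_one, hval]
    have hodd := fRef_div_low (u := (j : ℕ)) (s := (i : ℕ) + 1) (by omega) (k : ℕ)
    set A := (k : ℕ) / 2 ^ (j : ℕ)
    set B := fRef ((i : ℕ) + 1) (k : ℕ) / 2 ^ (j : ℕ)
    have h1 : (-1 : ℝ) ^ A * (-1 : ℝ) ^ B = -1 := by
      rw [← pow_add]
      exact Odd.neg_one_pow (Nat.odd_iff.mpr hodd)
    have h2 : (-1 : ℝ) ^ B * (-1 : ℝ) ^ B = 1 := by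
      rw [← mul_pow]; norm_num
    calc (-1 : ℝ) ^ A = (-1 : ℝ) ^ A * ((-1 : ℝ) ^ B * (-1 : ℝ) ^ B) := by rw [h2, mul_one]
      _ = ((-1 : ℝ) ^ A * (-1 : ℝ) ^ B) * (-1 : ℝ) ^ B := by ring
      _ = -1 * (-1 : ℝ) ^ B := by rw [h1]
  · rw [if_neg hji, pow_zero, one_mul, hval, fRef_div_high (by omega)]

/-! ### Products -/

section Products

variable {m : ℕ} (a b : Fin m → ZMod 2)

/-- The `i`-th factor of `A^a`. -/
def Af (i : Fin m) : Matrix (Fin (2 ^ m)) (Fin (2 ^ m)) ℝ :=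
  if a i = 1 then mirrorA m ((i : ℕ) + 1) else 1

/-- The `j`-th factor of `B^b`. -/
def Bf (j : Fin m) : Matrix (Fin (2 ^ m)) (Fin (2 ^ m)) ℝ :=
  if b j = 1 then mirrorB m ((j : ℕ) + 1) else 1

lemma mirrorAProd_eq : mirrorAProd m a = ((List.finRange m).map (Af a)).prod := rfl

lemma mirrorBProd_eq : mirrorBProd m b = ((List.finRange m).map (Bf b)).prod := rfl

/-- The self-map attached to the `i`-th factor of `A^a`. -/
def gA (i : Fin m) : Fin (2 ^ m) → Fin (2 ^ m) :=
  if a i = 1 then fFin i else id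

lemma Af_eq (i : Fin m) : Af a i = funMat (gA a i) := by
  by_cases h : a i = 1 <;> simp [Af, gA, h, mirrorA_eq, funMat_id]

lemma gA_invol (i : Fin m) (k : Fin (2 ^ m)) : gA a i (gA a i k) = k := by
  by_cases h : a i = 1 <;> simp only [gA, h, if_pos, if_neg, id]
  · exact Fin.ext (fRef_invol _ _)
  · simp [h]

lemma gA_comm (i j : Fin m) (k : Fin (2 ^ m)) : gA a i (gA a j k) = gA a j (gA a i k) := by
  by_cases h1 : a i = 1 <;> by_cases h2 : a j = 1 <;>
    simp only [gA, h1, h2, if_pos, if_neg, id] <;> try simp [h1, h2]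
  exact Fin.ext (fRef_comm _ _ _)

lemma A_struct (L : List (Fin m)) :
    ∃ f : Fin (2 ^ m) → Fin (2 ^ m),
      (L.map (Af a)).prod = funMat f ∧ (∀ i k, f (gA a i k) = gA a i (f k)) ∧
        ∀ k, f (f k) = k := by
  induction L with
  | nil =>
    exact ⟨id, by simp [funMat_id], fun i k => rfl, fun k => rfl⟩
  | cons i L ih =>
    obtain ⟨f, h1, h2, h3⟩ := ih
    refine ⟨fun k => f (gA a i k), ?_, ?_, ?_⟩
    · rw [List.map_cons, List.prod_cons, Af_eq, h1, funMat_mul]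
    · intro j k
      show f (gA a i (gA a j k)) = gA a j (f (gA a i k))
      rw [gA_comm a i j k]
      exact h2 j _
    · intro k
      show f (gA a i (f (gA a i k))) = k
      rw [h2 i, h3, gA_invol]

lemma Asq : mirrorAProd m a * mirrorAProd m a = 1 := by
  obtain ⟨f, h1, _, h3⟩ := A_struct a (List.finRange m)
  rw [mirrorAProd_eq, h1, funMat_mul, show (fun k => f (f k)) = (id : Fin (2 ^ m) → Fin (2 ^ m))
    from funext h3, funMat_id]

lemma B_struct (L : List (Fin m)) :
    ∃ d : Fin (2 ^ m) → ℝ, (L.map (Bf b)).prod = Matrix.diagonal d ∧ ∀ k, d k * d k = 1 := by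
  induction L with
  | nil => exact ⟨fun _ => 1, by simp, fun k => by norm_num⟩
  | cons j L ih =>
    obtain ⟨d, h1, h2⟩ := ih
    by_cases h : b j = 1
    · refine ⟨(fun k : Fin (2 ^ m) => (-1 : ℝ) ^ ((k : ℕ) / 2 ^ (j : ℕ))) * d, ?_, ?_⟩
      · rw [List.map_cons, List.prod_cons, h1, Bf, if_pos h]
        rw [show mirrorB m ((j : ℕ) + 1)
          = Matrix.diagonal fun k : Fin (2 ^ m) => (-1 : ℝ) ^ ((k : ℕ) / 2 ^ (j : ℕ)) by
            simp [mirrorB]]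
        rw [Matrix.diagonal_mul_diagonal]
        rfl
      · intro k
        have h4 : (-1 : ℝ) ^ ((k : ℕ) / 2 ^ (j : ℕ)) * (-1 : ℝ) ^ ((k : ℕ) / 2 ^ (j : ℕ)) = 1 := by
          rw [← mul_pow]; norm_num
        have h5 := h2 k
        simp only [Pi.mul_apply]
        nlinarith [h4, h5]
    · refine ⟨d, ?_, h2⟩
      rw [List.map_cons, List.prod_cons, h1, Bf, if_neg h, one_mul]

lemma Bsq : mirrorBProd m b * mirrorBProd m b = 1 := by
  obtain ⟨d, h1, h2⟩ := B_struct b (List.finRange m)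
  rw [mirrorBProd_eq, h1, Matrix.diagonal_mul_diagonal,
    show (fun i => d i * d i) = fun _ : Fin (2 ^ m) => (1 : ℝ) from funext h2,
    Matrix.diagonal_one]

lemma B_cross (j : Fin m) (L : List (Fin m)) :
    mirrorB m ((j : ℕ) + 1) * (L.map (Af a)).prod =
      ((-1 : ℝ) ^ (L.countP fun i => decide (a i = 1 ∧ (j : ℕ) ≤ (i : ℕ)))) •
        ((L.map (Af a)).prod * mirrorB m ((j : ℕ) + 1)) := by
  induction L with
  | nil => simp
  | cons i L ih =>
    rw [List.map_cons, List.prod_cons, List.countP_cons]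
    by_cases h : a i = 1
    · have hA : Af a i = mirrorA m ((i : ℕ) + 1) := if_pos h
      have hp : (if (decide (a i = 1 ∧ (j : ℕ) ≤ (i : ℕ))) = true then 1 else 0)
          = (if (j : ℕ) ≤ (i : ℕ) then 1 else 0) := by
        by_cases hji : (j : ℕ) ≤ (i : ℕ) <;> simp [h, hji]
      rw [hp]
      calc mirrorB m ((j : ℕ) + 1) * (Af a i * (L.map (Af a)).prod)
          = (mirrorB m ((j : ℕ) + 1) * Af a i) * (L.map (Af a)).prod := by
            rw [mul_assoc]
        _ = (((-1 : ℝ) ^ (if (j : ℕ) ≤ (i : ℕ) then 1 else 0)) •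
              (Af a i * mirrorB m ((j : ℕ) + 1))) * (L.map (Af a)).prod := by
            rw [hA, swapBA]
        _ = ((-1 : ℝ) ^ (if (j : ℕ) ≤ (i : ℕ) then 1 else 0)) •
              (Af a i * (mirrorB m ((j : ℕ) + 1) * (L.map (Af a)).prod)) := by
            rw [smul_mul_assoc, mul_assoc]
        _ = ((-1 : ℝ) ^ (if (j : ℕ) ≤ (i : ℕ) then 1 else 0)) •
              (Af a i * (((-1 : ℝ) ^ (L.countP fun i => decide (a i = 1 ∧ (j : ℕ) ≤ (i : ℕ)))) •
                ((L.map (Af a)).prod * mirrorB m ((j : ℕ) + 1)))) := by rw [ih]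
        _ = ((-1 : ℝ) ^ ((L.countP fun i => decide (a i = 1 ∧ (j : ℕ) ≤ (i : ℕ)))
              + (if (j : ℕ) ≤ (i : ℕ) then 1 else 0))) •
              ((Af a i * (L.map (Af a)).prod) * mirrorB m ((j : ℕ) + 1)) := by
            rw [mul_smul_comm, smul_smul, ← pow_add, ← mul_assoc, add_comm]
    · have hA : Af a i = 1 := if_neg h
      have hp : (if (decide (a i = 1 ∧ (j : ℕ) ≤ (i : ℕ))) = true then 1 else 0) = 0 := by
        simp [h]
      rw [hp, add_zero, hA, one_mul, ih]

lemma BA_cross (Lb : List (Fin m)) :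
    (Lb.map (Bf b)).prod * mirrorAProd m a =
      ((-1 : ℝ) ^ ((Lb.map fun j => if b j = 1 then
          ((List.finRange m).countP fun i => decide (a i = 1 ∧ (j : ℕ) ≤ (i : ℕ))) else 0).sum)) •
        (mirrorAProd m a * (Lb.map (Bf b)).prod) := by
  induction Lb with
  | nil => simp
  | cons j L ih =>
    rw [List.map_cons, List.prod_cons, List.map_cons, List.sum_cons]
    calc Bf b j * (L.map (Bf b)).prod * mirrorAProd m a
        = Bf b j * ((L.map (Bf b)).prod * mirrorAProd m a) := by rw [mul_assoc]
      _ = Bf b j * (((-1 : ℝ) ^ ((L.map fun j => if b j = 1 then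
            ((List.finRange m).countP fun i => decide (a i = 1 ∧ (j : ℕ) ≤ (i : ℕ))) else 0).sum)) •
            (mirrorAProd m a * (L.map (Bf b)).prod)) := by rw [ih]
      _ = ((-1 : ℝ) ^ ((L.map fun j => if b j = 1 then
            ((List.finRange m).countP fun i => decide (a i = 1 ∧ (j : ℕ) ≤ (i : ℕ))) else 0).sum)) •
            ((Bf b j * mirrorAProd m a) * (L.map (Bf b)).prod) := by
          rw [mul_smul_comm, ← mul_assoc]
      _ = ((-1 : ℝ) ^ ((if b j = 1 then
            ((List.finRange m).countP fun i => decide (a i = 1 ∧ (j : ℕ) ≤ (i : ℕ))) else 0)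
            + (L.map fun j => if b j = 1 then
            ((List.finRange m).countP fun i => decide (a i = 1 ∧ (j : ℕ) ≤ (i : ℕ))) else 0).sum)) •
            (mirrorAProd m a * (Bf b j * (L.map (Bf b)).prod)) := by
          by_cases h : b j = 1
          · rw [if_pos h]
            have hBf : Bf b j = mirrorB m ((j : ℕ) + 1) := if_pos h
            rw [hBf, mirrorAProd_eq, B_cross]
            rw [smul_mul_assoc, smul_smul, ← pow_add, ← mirrorAProd_eq, mul_assoc, add_comm]
          · have hBf : Bf b j = 1 := if_neg h
            rw [if_neg h, hBf, one_mul, zero_add, one_mul]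

lemma countP_eq_sum (p : Fin m → Bool) (L : List (Fin m)) :
    L.countP p = (L.map fun i => if p i then 1 else 0).sum := by
  induction L with
  | nil => simp
  | cons i L ih => by_cases h : p i <;> simp [List.countP_cons, h, ih] <;> omega

lemma delta_eq :
    mirrorDelta m a b = ((List.finRange m).map fun j => if b j = 1 then
      ((List.finRange m).countP fun i => decide (a i = 1 ∧ (j : ℕ) ≤ (i : ℕ))) else 0).sum := by
  have hR : ∀ p : Fin m → Bool, (List.finRange m).countP p = ∑ i : Fin m, if p i then 1 else 0 := by
    intro p
    rw [countP_eq_sum, ← Fin.sum_univ_def]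
  have hR2 : ((List.finRange m).map fun j => if b j = 1 then
      ((List.finRange m).countP fun i => decide (a i = 1 ∧ (j : ℕ) ≤ (i : ℕ))) else 0).sum
      = ∑ j : Fin m, if b j = 1 then
      (∑ i : Fin m, if a i = 1 ∧ (j : ℕ) ≤ (i : ℕ) then 1 else 0) else 0 := by
    rw [← Fin.sum_univ_def]
    apply Finset.sum_congr rfl
    intro j _
    by_cases h : b j = 1
    · rw [if_pos h, if_pos h, hR]
      apply Finset.sum_congr rfl
      intro i _
      simp
    · rw [if_neg h, if_neg h]
  rw [hR2, mirrorDelta, Finset.card_filter, Fintype.sum_prod_type]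
  rw [Finset.sum_comm]
  apply Finset.sum_congr rfl
  intro j _
  by_cases h : b j = 1
  · rw [if_pos h]
    apply Finset.sum_congr rfl
    intro i _
    refine if_congr ?_ rfl rfl
    rw [Fin.le_def]
    tauto
  · rw [if_neg h]
    apply Finset.sum_eq_zero
    intro i _
    simp [h]

end Products

theorem mirror_prod_commutation (m : ℕ) (a b : Fin m → ZMod 2) :
    mirrorBProd m b * mirrorAProd m a =
      ((-1 : ℝ) ^ mirrorDelta m a b) • (mirrorAProd m a * mirrorBProd m b) ∧
    (mirrorAProd m a * mirrorBProd m b) * (mirrorAProd m a * mirrorBProd m b) =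
      ((-1 : ℝ) ^ mirrorDelta m a b) • (1 : Matrix (Fin (2 ^ m)) (Fin (2 ^ m)) ℝ) := by
  have h1 : mirrorBProd m b * mirrorAProd m a =
      ((-1 : ℝ) ^ mirrorDelta m a b) • (mirrorAProd m a * mirrorBProd m b) := by
    rw [delta_eq a b, mirrorBProd_eq b]
    exact BA_cross a b (List.finRange m)
  refine ⟨h1, ?_⟩
  calc mirrorAProd m a * mirrorBProd m b * (mirrorAProd m a * mirrorBProd m b)
      = mirrorAProd m a * ((mirrorBProd m b * mirrorAProd m a) * mirrorBProd m b) := by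
        rw [mul_assoc, mul_assoc]
    _ = mirrorAProd m a * ((((-1 : ℝ) ^ mirrorDelta m a b) •
          (mirrorAProd m a * mirrorBProd m b)) * mirrorBProd m b) := by rw [h1]
    _ = ((-1 : ℝ) ^ mirrorDelta m a b) • ((mirrorAProd m a * mirrorAProd m a) *
          (mirrorBProd m b * mirrorBProd m b)) := by
        rw [smul_mul_assoc, mul_smul_comm]
        congr 1
        simp only [mul_assoc]
    _ = ((-1 : ℝ) ^ mirrorDelta m a b) • (1 : Matrix (Fin (2 ^ m)) (Fin (2 ^ m)) ℝ) := by
        rw [Asq, Bsq, one_mul]
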